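/- Qudit subalgebra: fix an integer d ≥ 1, let P₀ := (1/d) • Σ_{j=0}^{d−1} U(2πj/d) (the projection onto the closed span of {e_ℓ : ℓ ≡ 0 mod d}), and for k, k' ∈ Fin d define Q_{k,k'} := V^k ∘ P₀ ∘ (V*)^{k'} (powers taken with the natural-number values of k, k'). Then the Q_{k,k'} satisfy the matrix-unit relations Q_{k,k'}* = Q_{k',k} and Q_{k,k'} ∘ Q_{m,m'} = (if k' = m then Q_{k,m'} else 0) for all k,k',m,m' ∈ Fin d, with Σ_{k ∈ Fin d} Q_{k,k} = 1; consequently there exists an injective unital ℂ-star-algebra homomorphism from Matrix (Fin d) (Fin d) ℂ into B(H) sending the standard matrix unit E_{k,k'} to Q_{k,k'}. -/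

import Mathlib

open Complex

noncomputable section

/-- The Hilbert space `H := ℓ²(ℤ, ℂ)`. -/
abbrev H : Type := lp (fun _ : ℤ => ℂ) 2

/-- The orthonormal basis vectors `e ℓ = lp.single 2 ℓ 1`. -/
def e (ℓ : ℤ) : H := lp.single 2 ℓ 1

/-- `P₀ := (1/d) • Σ_{j<d} U(2πj/d)`, the projection onto the closed span of
`{e ℓ : ℓ ≡ 0 (mod d)}`. -/
def P₀ (U : ℝ → (H →L[ℂ] H)) (d : ℕ) : H →L[ℂ] H :=
  ((1 : ℂ) / d) • ∑ j ∈ Finset.range d, U (2 * Real.pi * j / d)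

/-- The matrix units `Q_{k,k'} := V^k ∘ P₀ ∘ (V*)^{k'}`. -/
def Q (U : ℝ → (H →L[ℂ] H)) (V : unitary (H →L[ℂ] H)) (d : ℕ) (k k' : Fin d) :
    H →L[ℂ] H :=
  ((V : H →L[ℂ] H) ^ (k : ℕ)) ∘L P₀ U d ∘L (star (V : H →L[ℂ] H)) ^ ((k' : ℕ))

lemma apply_hasSum (A : H →L[ℂ] H) (x : H) : HasSum (fun ℓ => x ℓ • A (e ℓ)) (A x) := by
  have hx : HasSum (fun ℓ => lp.single 2 ℓ (x ℓ)) x := lp.hasSum_single ENNReal.ofNat_ne_top x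
  have := hx.mapL A
  convert this using 2 with ℓ
  rw [e, ← map_smul, ← lp.single_smul, smul_eq_mul, mul_one]

lemma inner_e (m : ℤ) (f : H) : @inner ℂ _ _ (e m) f = f m := by
  rw [e, lp.inner_single_left]; simp

lemma e_apply (ℓ m : ℤ) : (e ℓ : ∀ _ : ℤ, ℂ) m = if m = ℓ then 1 else 0 := by
  rw [e, lp.single_apply]; simp [Pi.single_apply]

lemma e_ne_zero (ℓ : ℤ) : e ℓ ≠ 0 := by
  intro h
  have : (e ℓ : ∀ _ : ℤ, ℂ) ℓ = 0 := by rw [h]; rfl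
  rw [e_apply] at this
  simp at this

lemma ext_e {A B : H →L[ℂ] H} (h : ∀ ℓ, A (e ℓ) = B (e ℓ)) : A = B := by
  refine ContinuousLinearMap.ext fun x => ?_
  refine HasSum.unique ?_ (apply_hasSum B x)
  simpa only [h] using apply_hasSum A x

lemma star_diag (A : H →L[ℂ] H) (c : ℤ → ℂ) (hA : ∀ ℓ, A (e ℓ) = c ℓ • e ℓ) (m : ℤ) :
    (star A) (e m) = (starRingEnd ℂ) (c m) • e m := by
  rw [ContinuousLinearMap.star_eq_adjoint]
  refine ext_inner_right ℂ fun x => ?_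
  rw [ContinuousLinearMap.adjoint_inner_left]
  have h1 : HasSum (fun ℓ => (x : ∀ _ : ℤ, ℂ) ℓ • (@inner ℂ _ _ (e m) (A (e ℓ))))
      (@inner ℂ _ _ (e m) (A x)) := by
    have := (apply_hasSum A x).mapL (innerSL ℂ (e m))
    simpa using this
  have key : ∀ ℓ, (x : ∀ _ : ℤ, ℂ) ℓ • (@inner ℂ _ _ (e m) (A (e ℓ)))
      = if ℓ = m then c m * x m else 0 := by
    intro ℓ
    rw [hA, inner_smul_right, inner_e, smul_eq_mul, e_apply]
    by_cases hh : ℓ = m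
    · subst hh; simp [mul_comm]
    · simp [hh, Ne.symm hh]
  have h2 : (@inner ℂ _ _ (e m) (A x)) = c m * x m := by
    refine h1.unique ?_
    rw [funext key]
    exact hasSum_ite_eq m _
  rw [h2, inner_smul_left, inner_e, Complex.conj_conj]

lemma geom_key (d : ℕ) (hd : 1 ≤ d) (ℓ : ℤ) :
    ∑ j ∈ Finset.range d, Complex.exp (Complex.I * ℓ * ((2 * Real.pi * j / d : ℝ) : ℂ)) =
      if (d : ℤ) ∣ ℓ then (d : ℂ) else 0 := by
  have hd0 : (d : ℂ) ≠ 0 := Nat.cast_ne_zero.mpr (by omega)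
  set z : ℂ := Complex.exp (2 * Real.pi * Complex.I * ℓ / d) with hz
  have hterm : ∀ j ∈ Finset.range d,
      Complex.exp (Complex.I * ℓ * ((2 * Real.pi * j / d : ℝ) : ℂ)) = z ^ j := by
    intro j _
    rw [hz, ← Complex.exp_nat_mul]
    congr 1
    push_cast
    ring
  rw [Finset.sum_congr rfl hterm]
  have hzd : z ^ d = 1 := by
    rw [hz, ← Complex.exp_nat_mul]
    have : (d : ℂ) * (2 * Real.pi * Complex.I * ℓ / d) = ℓ * (2 * Real.pi * Complex.I) := by
      field_simp
    rw [this, Complex.exp_int_mul_two_pi_mul_I]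
  have hz1 : z = 1 ↔ (d : ℤ) ∣ ℓ := by
    rw [hz, Complex.exp_eq_one_iff]
    constructor
    · rintro ⟨n, hn⟩
      have hpi : (Real.pi : ℂ) ≠ 0 := Complex.ofReal_ne_zero.mpr Real.pi_ne_zero
      have h2 : (2 * (Real.pi : ℂ) * Complex.I) ≠ 0 := by
        simp [hpi, Complex.I_ne_zero]
      have hn2 : 2 * (Real.pi : ℂ) * Complex.I * ℓ = n * (2 * Real.pi * Complex.I) * d := by
        field_simp at hn
        linear_combination (2 * (Real.pi : ℂ) * Complex.I) * hn
      have hℓ : (ℓ : ℂ) = d * n := by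
        apply mul_left_cancel₀ h2
        linear_combination hn2
      exact ⟨n, by exact_mod_cast hℓ⟩
    · rintro ⟨n, hn⟩
      refine ⟨n, ?_⟩
      rw [hn]
      push_cast
      field_simp
  by_cases hdvd : (d : ℤ) ∣ ℓ
  · rw [if_pos hdvd]
    rw [hz1.mpr hdvd] at *
    simp
  · rw [if_neg hdvd]
    have hzne : z ≠ 1 := fun h => hdvd (hz1.mp h)
    rw [geom_sum_eq hzne, hzd]
    simp


lemma matrixUnits_starAlgHom {A : Type*} [Ring A] [Algebra ℂ A] [StarRing A] [StarModule ℂ A]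
    [NoZeroSMulDivisors ℂ A]
    (d : ℕ) (q : Fin d → Fin d → A)
    (hmul : ∀ k k' m m' : Fin d, q k k' * q m m' = if k' = m then q k m' else 0)
    (hsum : ∑ k : Fin d, q k k = 1)
    (hstar : ∀ k k' : Fin d, star (q k k') = q k' k)
    (hne : ∀ k k' : Fin d, q k k' ≠ 0) :
    ∃ Φ : Matrix (Fin d) (Fin d) ℂ →⋆ₐ[ℂ] A, Function.Injective Φ ∧
      ∀ k k' : Fin d, Φ (Matrix.single k k' 1) = q k k' := by
  classical
  set f : Matrix (Fin d) (Fin d) ℂ → A :=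
    fun M => ∑ k : Fin d, ∑ k' : Fin d, M k k' • q k k' with hf
  have hfapp : ∀ M, f M = ∑ k : Fin d, ∑ k' : Fin d, M k k' • q k k' := fun _ => rfl
  have hf_mul : ∀ M N, f (M * N) = f M * f N := by
    intro M N
    have expand : f M * f N
        = ∑ k : Fin d, ∑ k' : Fin d, ∑ m : Fin d, ∑ m' : Fin d,
            (M k k' * N m m') • (q k k' * q m m') := by
      rw [hfapp, hfapp, Finset.sum_mul]
      apply Finset.sum_congr rfl; intro k _
      rw [Finset.sum_mul]
      apply Finset.sum_congr rfl; intro k' _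
      rw [Finset.mul_sum]
      apply Finset.sum_congr rfl; intro m _
      rw [Finset.mul_sum]
      apply Finset.sum_congr rfl; intro m' _
      rw [smul_mul_smul_comm]
    rw [expand]
    have collapse : ∀ k k' : Fin d,
        ∑ m : Fin d, ∑ m' : Fin d, (M k k' * N m m') • (q k k' * q m m')
          = ∑ m' : Fin d, (M k k' * N k' m') • q k m' := by
      intro k k'
      rw [Finset.sum_comm]
      apply Finset.sum_congr rfl
      intro m' _
      rw [Finset.sum_eq_single k']
      · rw [hmul, if_pos rfl]
      · intro b _ hb
        rw [hmul, if_neg (Ne.symm hb), smul_zero]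
      · simp
    simp only [collapse]
    rw [hfapp]
    apply Finset.sum_congr rfl
    intro k _
    rw [Finset.sum_comm]
    apply Finset.sum_congr rfl
    intro m' _
    rw [Matrix.mul_apply, Finset.sum_smul]
  have hf_one : f 1 = 1 := by
    rw [hfapp, ← hsum]
    apply Finset.sum_congr rfl
    intro k _
    rw [Finset.sum_eq_single k]
    · rw [Matrix.one_apply_eq, one_smul]
    · intro b _ hb
      rw [Matrix.one_apply_ne (Ne.symm hb), zero_smul]
    · simp
  have hf_smul : ∀ (c : ℂ) M, f (c • M) = c • f M := by
    intro c M
    rw [hfapp, hfapp, Finset.smul_sum]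
    apply Finset.sum_congr rfl
    intro k _
    rw [Finset.smul_sum]
    apply Finset.sum_congr rfl
    intro k' _
    rw [Matrix.smul_apply, smul_eq_mul, smul_smul]
  have hf_star : ∀ M, f (star M) = star (f M) := by
    intro M
    rw [hfapp, hfapp, star_sum, Finset.sum_comm]
    apply Finset.sum_congr rfl
    intro k _
    rw [star_sum]
    apply Finset.sum_congr rfl
    intro k' _
    rw [star_smul, hstar, Matrix.star_apply, RCLike.star_def]
  have hf_std : ∀ k k' : Fin d, f (Matrix.single k k' 1) = q k k' := by
    intro k k'
    rw [hfapp]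
    rw [Finset.sum_eq_single k]
    · rw [Finset.sum_eq_single k']
      · rw [Matrix.single_apply_same, one_smul]
      · intro b _ hb
        rw [Matrix.single_apply_of_ne k k' 1 k b (by tauto), zero_smul]
      · simp
    · intro b _ hb
      apply Finset.sum_eq_zero
      intro b' _
      rw [Matrix.single_apply_of_ne k k' 1 b b' (by tauto), zero_smul]
    · simp
  let Φ : Matrix (Fin d) (Fin d) ℂ →⋆ₐ[ℂ] A :=
    { toFun := f
      map_one' := hf_one
      map_mul' := hf_mul
      map_zero' := by simp [hfapp]
      map_add' := by intro M N; simp [hfapp, add_smul, Finset.sum_add_distrib]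
      commutes' := by
        intro c
        show f (algebraMap ℂ _ c) = algebraMap ℂ A c
        rw [Algebra.algebraMap_eq_smul_one, Algebra.algebraMap_eq_smul_one, hf_smul, hf_one]
      map_star' := by
        intro M
        show f (star M) = star (f M)
        exact hf_star M }
  have hΦ : ∀ M, Φ M = f M := fun _ => rfl
  refine ⟨Φ, ?_, fun k k' => (hΦ _).trans (hf_std k k')⟩
  rw [injective_iff_map_eq_zero]
  intro M hM
  ext a b
  have step : q a a * Φ M * q b b
      = ∑ k : Fin d, ∑ k' : Fin d, M k k' • (q a a * q k k' * q b b) := by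
    rw [hΦ, hfapp, Finset.mul_sum, Finset.sum_mul]
    apply Finset.sum_congr rfl; intro k _
    rw [Finset.mul_sum, Finset.sum_mul]
    apply Finset.sum_congr rfl; intro k' _
    rw [mul_smul_comm, smul_mul_assoc]
  have key : q a a * Φ M * q b b = M a b • q a b := by
    rw [step, Finset.sum_eq_single a]
    · rw [Finset.sum_eq_single b]
      · rw [hmul, if_pos rfl, hmul, if_pos rfl]
      · intro c _ hc
        rw [hmul, if_pos rfl, hmul, if_neg hc, smul_zero]
      · simp
    · intro k _ hk
      apply Finset.sum_eq_zero
      intro k' _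
      rw [hmul, if_neg (Ne.symm hk), zero_mul, smul_zero]
    · simp
  rw [hM, mul_zero, zero_mul] at key
  have h0 := (smul_eq_zero.mp key.symm).resolve_right (hne a b)
  simpa using h0

/-- indicator -/
def ind (d : ℕ) (ℓ : ℤ) : ℂ := if (d : ℤ) ∣ ℓ then 1 else 0

/-- **Qudit subalgebra:** the operators `Q_{k,k'}` satisfy the matrix-unit relations
and sum to the identity, and consequently there is an injective unital
`ℂ`-star-algebra homomorphism `M_d(ℂ) → B(H)` sending the standard matrix unit
`E_{k,k'}` to `Q_{k,k'}`. -/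
theorem qudit_subalgebra
    (U : ℝ → (H →L[ℂ] H)) (V : unitary (H →L[ℂ] H))
    (hU : ∀ (θ : ℝ) (ℓ : ℤ), U θ (e ℓ) = Complex.exp (Complex.I * ℓ * θ) • e ℓ)
    (hV : ∀ ℓ : ℤ, (V : H →L[ℂ] H) (e ℓ) = e (ℓ + 1))
    (d : ℕ) (hd : 1 ≤ d) :
    (∀ k k' : Fin d, star (Q U V d k k') = Q U V d k' k) ∧
    (∀ k k' m m' : Fin d,
      Q U V d k k' ∘L Q U V d m m' = if k' = m then Q U V d k m' else 0) ∧
    (∑ k : Fin d, Q U V d k k = 1) ∧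
    ∃ Φ : Matrix (Fin d) (Fin d) ℂ →⋆ₐ[ℂ] (H →L[ℂ] H),
      Function.Injective Φ ∧
      ∀ k k' : Fin d, Φ (Matrix.single k k' 1) = Q U V d k k' := by
  have hd0 : (d : ℂ) ≠ 0 := Nat.cast_ne_zero.mpr (by omega)
  set W : H →L[ℂ] H := (V : H →L[ℂ] H) with hW
  -- action of P₀ on basis
  have hP : ∀ ℓ : ℤ, P₀ U d (e ℓ) = ind d ℓ • e ℓ := by
    intro ℓ
    rw [P₀, ContinuousLinearMap.smul_apply, ContinuousLinearMap.sum_apply]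
    have : ∀ j ∈ Finset.range d, U (2 * Real.pi * j / d) (e ℓ)
        = Complex.exp (Complex.I * ℓ * ((2 * Real.pi * j / d : ℝ) : ℂ)) • e ℓ := by
      intro j _; rw [hU]
    rw [Finset.sum_congr rfl this, ← Finset.sum_smul, geom_key d hd ℓ, smul_smul, ind]
    by_cases hdvd : (d : ℤ) ∣ ℓ <;> simp [hdvd, hd0]
  -- powers of V
  have hWpow : ∀ (n : ℕ) (ℓ : ℤ), (W ^ n) (e ℓ) = e (ℓ + n) := by
    intro n
    induction n with
    | zero => intro ℓ; simp
    | succ n ih =>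
      intro ℓ
      rw [pow_succ, ContinuousLinearMap.mul_apply, hV, ih]
      congr 1
      push_cast
      ring
  -- star V on basis
  have hWstar : ∀ ℓ : ℤ, (star W) (e ℓ) = e (ℓ - 1) := by
    intro ℓ
    have h1 : (star W * W) (e (ℓ - 1)) = e (ℓ - 1) := by
      have : star W * W = 1 := by
        rw [hW]
        simpa using congrArg (Subtype.val) (unitary.star_mul_self V)
      rw [this]; rfl
    rw [ContinuousLinearMap.mul_apply, hV] at h1
    simpa using h1
  have hWstarpow : ∀ (n : ℕ) (ℓ : ℤ), ((star W) ^ n) (e ℓ) = e (ℓ - n) := by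
    intro n
    induction n with
    | zero => intro ℓ; simp
    | succ n ih =>
      intro ℓ
      rw [pow_succ, ContinuousLinearMap.mul_apply, hWstar, ih]
      congr 1
      push_cast
      ring
  -- action of Q on basis
  have hQ : ∀ (k k' : Fin d) (ℓ : ℤ),
      Q U V d k k' (e ℓ) = ind d (ℓ - k') • e (ℓ - k' + k) := by
    intro k k' ℓ
    rw [Q, ContinuousLinearMap.comp_apply, ContinuousLinearMap.comp_apply, ← hW,
      hWstarpow, hP, map_smul, hWpow]
  -- divisibility helper
  have hdvd_iff : ∀ k m : Fin d, (d : ℤ) ∣ ((m : ℤ) - (k : ℤ)) ↔ k = m := by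
    intro k m
    constructor
    · intro h
      have h1 : |(m : ℤ) - (k : ℤ)| < d := by
        have := k.isLt; have := m.isLt
        rw [abs_lt]; omega
      have := Int.eq_zero_of_abs_lt_dvd h h1
      have : (k : ℤ) = (m : ℤ) := by omega
      exact Fin.ext (by exact_mod_cast this)
    · rintro rfl; simp
  -- the product relation
  have hmul : ∀ k k' m m' : Fin d,
      Q U V d k k' ∘L Q U V d m m' = if k' = m then Q U V d k m' else 0 := by
    intro k k' m m'
    apply ext_e
    intro ℓ
    rw [ContinuousLinearMap.comp_apply, hQ, map_smul, hQ, smul_smul, ind, ind]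
    by_cases h1 : (d : ℤ) ∣ (ℓ - m')
    · by_cases h2 : k' = m
      · subst h2
        have h3 : (d : ℤ) ∣ (ℓ - (m' : ℤ) + k' - k') := by simpa using h1
        rw [if_pos h1, if_pos h3, if_pos rfl, hQ, ind, if_pos h1, one_mul, one_smul, one_smul]
        congr 1
        ring
      · have h3 : ¬ (d : ℤ) ∣ (ℓ - m' + m - k') := by
          intro h
          apply h2
          have h4 : (d : ℤ) ∣ ((m : ℤ) - k') := by
            have h5 := dvd_sub h h1
            have h6 : ℓ - (m' : ℤ) + m - k' - (ℓ - m') = (m : ℤ) - k' := by ring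
            rwa [h6] at h5
          exact (hdvd_iff k' m).mp h4
        rw [if_pos h1, if_neg h3, if_neg h2]
        simp
    · rw [if_neg h1, zero_mul, zero_smul]
      split_ifs with h2
      · rw [hQ, ind, if_neg h1, zero_smul]
      · rfl
  -- the star relation
  have hPstar : star (P₀ U d) = P₀ U d := by
    apply ext_e
    intro ℓ
    rw [star_diag (P₀ U d) (fun ℓ => ind d ℓ) hP ℓ, hP, ind]
    by_cases hdvd : (d : ℤ) ∣ ℓ <;> simp [hdvd]
  have hstar : ∀ k k' : Fin d, star (Q U V d k k') = Q U V d k' k := by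
    intro k k'
    rw [Q, Q, ← hW, ← ContinuousLinearMap.mul_def, ← ContinuousLinearMap.mul_def,
      ← ContinuousLinearMap.mul_def, ← ContinuousLinearMap.mul_def, star_mul, star_mul,
      star_pow, star_pow, star_star, hPstar, mul_assoc]
  -- sum to one
  have hsum : ∑ k : Fin d, Q U V d k k = 1 := by
    apply ext_e
    intro ℓ
    rw [ContinuousLinearMap.sum_apply]
    have hk0lt : ((ℓ % d).toNat < d) := by
      have h1 : 0 ≤ ℓ % (d : ℤ) := Int.emod_nonneg ℓ (by exact_mod_cast (by omega : (d:ℤ) ≠ 0))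
      have h2 : ℓ % (d : ℤ) < d := Int.emod_lt_of_pos ℓ (by exact_mod_cast (by omega : (0:ℤ) < d))
      omega
    set k₀ : Fin d := ⟨(ℓ % d).toNat, hk0lt⟩ with hk₀
    have hk₀z : ((k₀ : ℕ) : ℤ) = ℓ % d := by
      have h1 : 0 ≤ ℓ % (d : ℤ) := Int.emod_nonneg ℓ (by exact_mod_cast (by omega : (d:ℤ) ≠ 0))
      have : ((k₀ : ℕ) : ℤ) = ((ℓ % (d:ℤ)).toNat : ℤ) := rfl
      rw [this, Int.toNat_of_nonneg h1]
    have key : ∀ k : Fin d, Q U V d k k (e ℓ) = if k = k₀ then e ℓ else 0 := by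
      intro k
      rw [hQ, ind]
      have : ℓ - k + k = ℓ := by ring
      rw [this]
      by_cases h : k = k₀
      · subst h
        rw [if_pos (by
          rw [hk₀z]
          exact Int.dvd_self_sub_of_emod_eq rfl), if_pos rfl, one_smul]
      · rw [if_neg (fun hdvd => h ?_), if_neg h]
        · simp
        · have h1 : ℓ % (d:ℤ) = (k : ℤ) % d := Int.ModEq.symm (Int.modEq_iff_dvd.mpr (by
            simpa using hdvd))
          have h2 : (k : ℤ) % d = k := Int.emod_eq_of_lt (by positivity) (by exact_mod_cast k.isLt)
          apply Fin.ext
          have : (k : ℤ) = (k₀ : ℤ) := by rw [hk₀z, h1, h2]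
          exact_mod_cast this
    rw [Finset.sum_congr rfl (fun k _ => key k), Finset.sum_ite_eq' Finset.univ k₀ (fun _ => e ℓ)]
    simp
  refine ⟨hstar, hmul, hsum, ?_⟩
  have hmul' : ∀ k k' m m' : Fin d,
      Q U V d k k' * Q U V d m m' = if k' = m then Q U V d k m' else 0 := hmul
  have hne : ∀ k k' : Fin d, Q U V d k k' ≠ 0 := by
    intro k k' h
    have h1 : Q U V d k k' (e k') = e k := by
      rw [hQ, ind, if_pos (by simp), one_smul]
      congr 1
      ring
    rw [h] at h1
    exact e_ne_zero k (by simpa using h1.symm)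
  exact matrixUnits_starAlgHom d (Q U V d) hmul' hsum hstar hne
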